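/- Let G be a Polish group and let H ≤ G be a closed subgroup such that there exists a constant K with: for every continuous left-invariant pseudometric δ on G and every g ∈ G there is h ∈ H with δ(g,h) ≤ K (H is cobounded in G). If every continuous affine isometric action of H on a Hilbert space has a fixed point, then every continuous affine isometric action of G on a Hilbert space has a fixed point. -/

import Mathlib

universe u v

theorem propertyFH_of_cobounded_subgroup {G : Type v} [Group G] [TopologicalSpace G]
    [IsTopologicalGroup G] [PolishSpace G]
    (H : Subgroup G) (hclosed : IsClosed (H : Set G)) (K : ℝ)
    (hcobounded : ∀ d : G → G → ℝ,
      Continuous (fun p : G × G => d p.1 p.2) →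
      (∀ k g h : G, d (k * g) (k * h) = d g h) →
      (∀ g : G, d g g = 0) →
      (∀ g h : G, d g h = d h g) →
      (∀ g h k : G, d g k ≤ d g h + d h k) →
      ∀ g : G, ∃ h ∈ H, d g h ≤ K)
    (hFH_H : ∀ (𝓗 : Type u) [NormedAddCommGroup 𝓗] [InnerProductSpace ℂ 𝓗] [CompleteSpace 𝓗]
      (α : H →* (𝓗 ≃ᵢ 𝓗)), Continuous (fun p : H × 𝓗 => α p.1 p.2) →
      ∃ x : 𝓗, ∀ h : H, α h x = x) :
    ∀ (𝓗 : Type u) [NormedAddCommGroup 𝓗] [InnerProductSpace ℂ 𝓗] [CompleteSpace 𝓗]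
      (α : G →* (𝓗 ≃ᵢ 𝓗)), Continuous (fun p : G × 𝓗 => α p.1 p.2) →
      ∃ x : 𝓗, ∀ g : G, α g x = x := by
  intro 𝓗 _ _ _ α hcont
  -- fixed point of H
  obtain ⟨ξ, hξ⟩ := hFH_H 𝓗 (α.comp H.subtype)
    (hcont.comp ((continuous_subtype_val.comp continuous_fst).prodMk continuous_snd))
  -- orbit map continuity
  have horbc : Continuous fun g : G => α g ξ :=
    hcont.comp (continuous_id.prodMk continuous_const)
  -- orbit bound from coboundedness
  have horb : ∀ g : G, dist (α g ξ) ξ ≤ K := by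
    intro g
    obtain ⟨h, hh, hle⟩ := hcobounded (fun g h => dist (α g ξ) (α h ξ))
      ((horbc.comp continuous_fst).dist (horbc.comp continuous_snd))
      (fun k g h => by
        simp only [map_mul, IsometryEquiv.mul_apply, IsometryEquiv.dist_eq])
      (fun g => dist_self _) (fun g h => dist_comm _ _)
      (fun g h k => dist_triangle _ _ _) g
    have : α h ξ = ξ := hξ ⟨h, hh⟩
    rwa [this] at hle
  -- radius function
  set f : 𝓗 → ℝ := fun x => ⨆ g : G, dist (α g ξ) x with hf
  have hbdd : ∀ x : 𝓗, BddAbove (Set.range fun g : G => dist (α g ξ) x) := by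
    intro x
    refine ⟨K + dist ξ x, ?_⟩
    rintro _ ⟨g, rfl⟩
    exact (dist_triangle _ ξ x).trans (by linarith [horb g])
  have hfge : ∀ x (g : G), dist (α g ξ) x ≤ f x := fun x g => le_ciSup (hbdd x) g
  have hf0 : ∀ x, 0 ≤ f x := fun x => le_trans dist_nonneg (hfge x 1)
  have hflip : ∀ x y : 𝓗, f x ≤ f y + dist y x := fun x y =>
    ciSup_le fun g => (dist_triangle _ y x).trans (add_le_add_left (hfge y g) _)
  -- invariance of f
  have hinv : ∀ (g : G) (x : 𝓗), f (α g x) = f x := by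
    intro g x
    have hr : (Set.range fun h : G => dist (α h ξ) (α g x))
        = Set.range fun h : G => dist (α h ξ) x := by
      ext r
      constructor
      · rintro ⟨h, rfl⟩
        refine ⟨g⁻¹ * h, ?_⟩
        show dist (α (g⁻¹ * h) ξ) x = dist (α h ξ) (α g x)
        have hh : α h ξ = α g (α (g⁻¹ * h) ξ) := by
          rw [← IsometryEquiv.mul_apply, ← map_mul, mul_inv_cancel_left]
        rw [hh, IsometryEquiv.dist_eq]
      · rintro ⟨h, rfl⟩
        refine ⟨g * h, ?_⟩
        show dist (α (g * h) ξ) (α g x) = dist (α h ξ) x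
        rw [map_mul, IsometryEquiv.mul_apply, IsometryEquiv.dist_eq]
    exact congrArg sSup hr
  -- the infimum radius
  set m : ℝ := ⨅ x : 𝓗, f x with hm
  have hbb : BddBelow (Set.range f) := ⟨0, by rintro _ ⟨x, rfl⟩; exact hf0 x⟩
  have hm_le : ∀ x : 𝓗, m ≤ f x := fun x => ciInf_le hbb x
  have hm0 : 0 ≤ m := le_ciInf hf0
  -- key parallelogram estimate
  have hkey : ∀ x y : 𝓗, ‖x - y‖ ^ 2 ≤ 2 * (f x) ^ 2 + 2 * (f y) ^ 2 - 4 * m ^ 2 := by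
    intro x y
    set z : 𝓗 := (2 : ℝ)⁻¹ • (x + y) with hz
    set C : ℝ := ((f x) ^ 2 + (f y) ^ 2) / 2 - ‖x - y‖ ^ 2 / 4 with hC
    have hg : ∀ g : G, (dist (α g ξ) z) ^ 2 ≤ C := by
      intro g
      set s : 𝓗 := α g ξ with hs
      have hpar := parallelogram_law_with_norm ℂ (s - x) (s - y)
      have hab : (s - x) - (s - y) = y - x := by abel
      have hab2 : (s - x) + (s - y) = (2 : ℝ) • (s - z) := by
        rw [hz, smul_sub, smul_smul]
        norm_num
        module
      have h2 : ‖(s - x) + (s - y)‖ = 2 * ‖s - z‖ := by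
        rw [hab2, norm_smul]
        simp
      rw [hab, h2] at hpar
      have hnx : ‖s - x‖ = dist s x := (dist_eq_norm _ _).symm
      have hny : ‖s - y‖ = dist s y := (dist_eq_norm _ _).symm
      have hnz : ‖s - z‖ = dist s z := (dist_eq_norm _ _).symm
      have hyx : ‖y - x‖ = ‖x - y‖ := norm_sub_rev _ _
      have h1 : dist s x ≤ f x := hfge x g
      have h2' : dist s y ≤ f y := hfge y g
      have h3 : (0:ℝ) ≤ dist s x := dist_nonneg
      have h4 : (0:ℝ) ≤ dist s y := dist_nonneg
      rw [hnx, hny, hnz, hyx] at hpar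
      rw [hC]
      nlinarith [hpar]
    have hC0 : 0 ≤ C := le_trans (sq_nonneg _) (hg 1)
    have hfz : f z ≤ Real.sqrt C := by
      refine ciSup_le fun g => ?_
      have := hg g
      nlinarith [Real.sq_sqrt hC0, Real.sqrt_nonneg C, dist_nonneg (x := α g ξ) (y := z),
        Real.sqrt_le_sqrt this]
    have hmC : m ^ 2 ≤ C := by
      have h1 : m ≤ Real.sqrt C := le_trans (hm_le z) hfz
      nlinarith [Real.sq_sqrt hC0]
    rw [hC] at hmC
    nlinarith [hmC]
  -- minimizing sequence
  have hu : ∀ n : ℕ, ∃ x : 𝓗, f x < m + 1 / (n + 1) := by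
    intro n
    refine exists_lt_of_ciInf_lt ?_
    rw [← hm]
    have : (0:ℝ) < 1 / (n + 1) := by positivity
    linarith
  choose u hufx using hu
  have hfun0 : ∀ n : ℕ, f (u n) < m + 1 / (n + 1) := hufx
  -- Cauchy
  have hbnd : ∀ N n k : ℕ, N ≤ n → N ≤ k →
      dist (u n) (u k) ≤ Real.sqrt ((8 * m + 4) * (1 / (N + 1))) := by
    intro N n k hn hk
    have he : (0:ℝ) < 1 / (N + 1) := by positivity
    have he1 : (1:ℝ) / (N + 1) ≤ 1 := by
      rw [div_le_one (by positivity)]; linarith [Nat.cast_nonneg (α := ℝ) N]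
    have hnn : (1:ℝ) / (n + 1) ≤ 1 / (N + 1) := by
      apply one_div_le_one_div_of_le (by positivity)
      have : (N:ℝ) ≤ n := Nat.cast_le.mpr hn
      linarith
    have hkk : (1:ℝ) / (k + 1) ≤ 1 / (N + 1) := by
      apply one_div_le_one_div_of_le (by positivity)
      have : (N:ℝ) ≤ k := Nat.cast_le.mpr hk
      linarith
    have h1 : f (u n) ≤ m + 1 / (N + 1) := le_trans (hfun0 n).le (by linarith)
    have h2 : f (u k) ≤ m + 1 / (N + 1) := le_trans (hfun0 k).le (by linarith)
    have hsq : dist (u n) (u k) ^ 2 ≤ (8 * m + 4) * (1 / (N + 1)) := by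
      have := hkey (u n) (u k)
      rw [dist_eq_norm]
      nlinarith [hf0 (u n), hf0 (u k)]
    have hd0 : (0:ℝ) ≤ dist (u n) (u k) := dist_nonneg
    nlinarith [Real.sq_sqrt (le_trans (sq_nonneg _) hsq), Real.sqrt_nonneg ((8 * m + 4) * (1 / (N + 1))),
      Real.sqrt_le_sqrt hsq]
  have hcauchy : CauchySeq u := by
    refine cauchySeq_of_le_tendsto_0 _ (fun n k N hn hk => hbnd N n k hn hk) ?_
    have h0 : Filter.Tendsto (fun N : ℕ => (8 * m + 4) * (1 / (N + 1 : ℝ))) Filter.atTop (nhds 0) := by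
      have := tendsto_one_div_add_atTop_nhds_zero_nat.const_mul (8 * m + 4)
      simpa using this
    have := (Real.continuous_sqrt.tendsto 0).comp h0
    simpa [Function.comp_def] using this
  obtain ⟨x₀, hx₀⟩ := cauchySeq_tendsto_of_complete hcauchy
  -- f x₀ = m
  have hfx₀ : f x₀ = m := by
    refine le_antisymm ?_ (hm_le x₀)
    have htend : Filter.Tendsto (fun n : ℕ => (m + 1 / (n + 1)) + dist (u n) x₀)
        Filter.atTop (nhds m) := by
      have h1 : Filter.Tendsto (fun n : ℕ => m + 1 / (n + 1 : ℝ)) Filter.atTop (nhds m) := by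
        have := tendsto_one_div_add_atTop_nhds_zero_nat.const_add m
        simpa using this
      have h2 : Filter.Tendsto (fun n : ℕ => dist (u n) x₀) Filter.atTop (nhds 0) :=
        tendsto_iff_dist_tendsto_zero.mp hx₀
      simpa using h1.add h2
    refine ge_of_tendsto' htend fun n => ?_
    calc f x₀ ≤ f (u n) + dist (u n) x₀ := hflip x₀ (u n)
      _ ≤ (m + 1 / (n + 1)) + dist (u n) x₀ := by linarith [(hfun0 n).le]
  -- uniqueness of circumcenter
  have huniq : ∀ x : 𝓗, f x = m → x = x₀ := by
    intro x hx
    have := hkey x x₀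
    rw [hx, hfx₀] at this
    have h0 : ‖x - x₀‖ ^ 2 ≤ 0 := by nlinarith
    have : ‖x - x₀‖ = 0 := by nlinarith [norm_nonneg (x - x₀), sq_nonneg ‖x - x₀‖]
    exact sub_eq_zero.mp (norm_eq_zero.mp this)
  exact ⟨x₀, fun g => huniq (α g x₀) (by rw [hinv g x₀, hfx₀])⟩
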